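/- If N is a normal subgroup of a finite group G and x ∈ N, then the size of the conjugacy class of x in N divides the size of the conjugacy class of x in G. -/

import Mathlib

open Subgroup

theorem aux_relindex_dvd {G : Type*} [Group G] [Finite G] (H N : Subgroup G) [N.Normal] :
    H.relIndex N ∣ H.index := by
  have h1 : H.relIndex N * N.index = (H ⊓ N).index := by
    rw [← inf_relIndex_right]; exact relIndex_mul_index inf_le_right
  have h2 : N.relIndex H * H.index = (H ⊓ N).index := by
    rw [← inf_relIndex_left]; exact relIndex_mul_index inf_le_left
  have h3 : N.relIndex H * (H ⊔ N).index = N.index := by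
    rw [← relIndex_sup_right]; exact relIndex_mul_index le_sup_right
  have hne : N.relIndex H ≠ 0 := Subgroup.index_ne_zero_of_finite
  have key : N.relIndex H * (H.relIndex N * (H ⊔ N).index) = N.relIndex H * H.index := by
    rw [h2, ← h1, ← h3]; ring
  exact ⟨(H ⊔ N).index, (Nat.eq_of_mul_eq_mul_left (Nat.pos_of_ne_zero hne) key).symm⟩

theorem stmt_2 {G : Type*} [Group G] [Finite G] (N : Subgroup G) [N.Normal]
    (x : G) (hx : x ∈ N) :
    Nat.card (MulAction.orbit (ConjAct N) (⟨x, hx⟩ : N)) ∣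
      Nat.card (MulAction.orbit (ConjAct G) x) := by
  have hG : Nat.card (MulAction.orbit (ConjAct G) x) = (Subgroup.centralizer {x}).index := by
    rw [Subgroup.centralizer_eq_comap_stabilizer]
    exact ((MulAction.index_stabilizer (ConjAct G) x).trans (Nat.card_coe_set_eq _)).symm.trans
      (Subgroup.index_comap_of_surjective _ ConjAct.toConjAct.surjective).symm
  have hcent : Subgroup.centralizer {(⟨x, hx⟩ : N)} = (Subgroup.centralizer {x}).subgroupOf N := by
    ext n
    simp only [mem_centralizer_iff, Set.mem_singleton_iff, forall_eq, mem_subgroupOf,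
      Subtype.ext_iff]
    constructor
    · intro h; simpa using h ⟨x, hx⟩ rfl
    · intro hcomm y hy
      push_cast
      rw [hy]
      exact hcomm
  have hN : Nat.card (MulAction.orbit (ConjAct N) (⟨x, hx⟩ : N)) =
      (Subgroup.centralizer {x}).relIndex N := by
    rw [show (Subgroup.centralizer {x}).relIndex N =
      ((Subgroup.centralizer {x}).subgroupOf N).index from rfl, ← hcent,
      Subgroup.centralizer_eq_comap_stabilizer]
    exact ((MulAction.index_stabilizer (ConjAct N) _).trans (Nat.card_coe_set_eq _)).symm.trans
      (Subgroup.index_comap_of_surjective _ ConjAct.toConjAct.surjective).symm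
  rw [hG, hN]
  exact aux_relindex_dvd _ N
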